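/- Bound(k,n) is a lower order ideal of S̃_n^k in the affine Bruhat order: if f ∈ Bound(k,n) and g ∈ S̃_n^k satisfies g ≤ f in the affine Bruhat order, then g ∈ Bound(k,n). -/

import Mathlib

/-- An (extended) affine permutation of period n: a bijection ℤ → ℤ with
f(i+n) = f(i)+n for all i. -/
def IsAffinePerm (n : ℕ) (f : ℤ → ℤ) : Prop :=
  Function.Bijective f ∧ ∀ i : ℤ, f (i + n) = f i + n

/-- f ∈ S̃_n^k : the affine permutation f has ball number (average) k,
i.e. Σ_{i=1}^n (f(i) − i) = k·n. -/
def HasAv (n : ℕ) (k : ℤ) (f : ℤ → ℤ) : Prop :=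
  ∑ i ∈ Finset.Icc (1 : ℤ) (n : ℤ), (f i - i) = k * n

/-- The length of an affine permutation: the number of pairs (i,j) with
1 ≤ i ≤ n, i < j and f(i) > f(j). -/
noncomputable def alen (n : ℕ) (f : ℤ → ℤ) : ℕ :=
  {p : ℤ × ℤ | 1 ≤ p.1 ∧ p.1 ≤ (n : ℤ) ∧ p.1 < p.2 ∧ f p.2 < f p.1}.ncard

/-- The affine transposition τ_{ab} (a < b, n ∤ b−a): exchanges a+rn and b+rn
for all r ∈ ℤ and fixes everything else. -/
def affTrans (n : ℕ) (a b : ℤ) : ℤ → ℤ := fun i =>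
  if (n : ℤ) ∣ (i - a) then b + (i - a)
  else if (n : ℤ) ∣ (i - b) then a + (i - b)
  else i

/-- One step of the affine Bruhat order: g < g·τ_{ab} whenever the length increases. -/
def affBruhatStep (n : ℕ) (g h : ℤ → ℤ) : Prop :=
  ∃ a b : ℤ, a < b ∧ ¬ ((n : ℤ) ∣ (b - a)) ∧
    h = g ∘ affTrans n a b ∧ alen n g < alen n h

/-- The affine Bruhat order: the partial order generated by the steps above. -/
def affBruhatLE (n : ℕ) (g f : ℤ → ℤ) : Prop :=
  Relation.ReflTransGen (affBruhatStep n) g f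

/-- Bounded affine permutation: i ≤ f(i) ≤ i + n for all i. -/
def IsBounded (n : ℕ) (f : ℤ → ℤ) : Prop := ∀ i : ℤ, i ≤ f i ∧ f i ≤ i + n


namespace Stmt4Aux


lemma per_iter {n : ℕ} {f : ℤ → ℤ} (hf : ∀ i : ℤ, f (i + n) = f i + n) :
    ∀ (m : ℤ) (x : ℤ), f (x + m * n) = f x + m * n := by
  intro m
  induction m using Int.induction_on with
  | zero => simp
  | succ i ih =>
      intro x
      have e : x + ((i : ℤ) + 1) * n = (x + (i : ℤ) * n) + n := by ring
      rw [e, hf, ih]; ring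
  | pred i ih =>
      intro x
      have e : x + (-(i : ℤ) - 1) * n + n = x + (-(i : ℤ)) * n := by ring
      have h2 := hf (x + (-(i : ℤ) - 1) * n)
      rw [e] at h2
      have h3 := ih x
      have e2 : (-(i:ℤ) - 1) * (n:ℤ) = (-(i:ℤ)) * n - (n:ℤ) := by ring
      linarith [h2, h3, e2]

lemma dvd_shift {n x y : ℤ} : (n ∣ (x + n - y)) ↔ (n ∣ (x - y)) := by
  constructor
  · intro h
    have h2 := dvd_sub h (dvd_refl n)
    have e : x + n - y - n = x - y := by ring
    rwa [e] at h2
  · intro h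
    have h2 := dvd_add h (dvd_refl n)
    have e : x - y + n = x + n - y := by ring
    rwa [e] at h2

lemma tau_A {n : ℕ} {a b x : ℤ} (h : (n:ℤ) ∣ (x - a)) :
    affTrans n a b x = b + (x - a) := by
  unfold affTrans; rw [if_pos h]

lemma tau_B {n : ℕ} {a b x : ℤ} (hnd : ¬ (n:ℤ) ∣ (b - a)) (h : (n:ℤ) ∣ (x - b)) :
    affTrans n a b x = a + (x - b) := by
  have hna : ¬ (n:ℤ) ∣ (x - a) := by
    intro h'
    apply hnd
    have h2 := dvd_sub h' h
    have e : x - a - (x - b) = b - a := by ring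
    rwa [e] at h2
  unfold affTrans; rw [if_neg hna, if_pos h]

lemma tau_O {n : ℕ} {a b x : ℤ} (ha : ¬ (n:ℤ) ∣ (x - a)) (hb : ¬ (n:ℤ) ∣ (x - b)) :
    affTrans n a b x = x := by
  unfold affTrans; rw [if_neg ha, if_neg hb]

lemma tau_invol {n : ℕ} {a b : ℤ} (hnd : ¬ (n:ℤ) ∣ (b - a)) (x : ℤ) :
    affTrans n a b (affTrans n a b x) = x := by
  by_cases hA : (n:ℤ) ∣ (x - a)
  · rw [tau_A hA]
    have hb : (n:ℤ) ∣ (b + (x - a) - b) := by simpa using hA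
    rw [tau_B hnd hb]; ring
  · by_cases hB : (n:ℤ) ∣ (x - b)
    · rw [tau_B hnd hB]
      have ha : (n:ℤ) ∣ (a + (x - b) - a) := by simpa using hB
      rw [tau_A ha]; ring
    · rw [tau_O hA hB, tau_O hA hB]

lemma tau_per {n : ℕ} {a b : ℤ} (hnd : ¬ (n:ℤ) ∣ (b - a)) (x : ℤ) :
    affTrans n a b (x + n) = affTrans n a b x + n := by
  by_cases hA : (n:ℤ) ∣ (x - a)
  · rw [tau_A (dvd_shift.mpr hA), tau_A hA]; ring
  · by_cases hB : (n:ℤ) ∣ (x - b)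
    · rw [tau_B hnd (dvd_shift.mpr hB), tau_B hnd hB]; ring
    · rw [tau_O (fun h => hA (dvd_shift.mp h)) (fun h => hB (dvd_shift.mp h)),
        tau_O hA hB]

lemma tau_bound {n : ℕ} {a b : ℤ} (hab : a < b) (hnd : ¬ (n:ℤ) ∣ (b - a)) (x : ℤ) :
    x - (b - a) ≤ affTrans n a b x ∧ affTrans n a b x ≤ x + (b - a) := by
  by_cases hA : (n:ℤ) ∣ (x - a)
  · rw [tau_A hA]; constructor <;> linarith
  · by_cases hB : (n:ℤ) ∣ (x - b)
    · rw [tau_B hnd hB]; constructor <;> linarith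
    · rw [tau_O hA hB]; constructor <;> linarith

lemma eq_of_small {n x y cx cy : ℤ} (hn : 1 ≤ n) (hx1 : 1 ≤ x) (hx2 : x ≤ n)
    (hy1 : 1 ≤ y) (hy2 : y ≤ n) (h : x + cx * n = y + cy * n) : x = y ∧ cx = cy := by
  have key : cx = cy := by
    by_contra hne
    have e : x - y = (cy - cx) * n := by
      have e2 : (cy - cx) * n = cy * n - cx * n := by ring
      linarith [e2]
    rcases lt_or_gt_of_ne hne with hlt | hgt
    · have h1 : (1:ℤ) ≤ cy - cx := by omega
      nlinarith
    · have h1 : cy - cx ≤ (-1:ℤ) := by omega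
      nlinarith
  refine ⟨?_, key⟩
  rw [key] at h
  linarith

def invSet (n : ℕ) (f : ℤ → ℤ) : Set (ℤ × ℤ) :=
  {p : ℤ × ℤ | 1 ≤ p.1 ∧ p.1 ≤ (n : ℤ) ∧ p.1 < p.2 ∧ f p.2 < f p.1}

lemma alen_eq (n : ℕ) (f : ℤ → ℤ) : alen n f = (invSet n f).ncard := rfl


lemma core {n : ℕ} {a b : ℤ} (hn : 1 ≤ n) (hab : a < b) (hnd : ¬ (n:ℤ) ∣ (b - a))
    {g : ℤ → ℤ} (hg : IsAffinePerm n g)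
    (hbdd : IsBounded n (g ∘ affTrans n a b))
    (hba : g b < g a) :
    alen n (g ∘ affTrans n a b) ≤ alen n g := by
  have hnz : (0:ℤ) < (n:ℤ) := by exact_mod_cast hn
  have tinv : ∀ x, affTrans n a b (affTrans n a b x) = x := tau_invol hnd
  have tinj : Function.Injective (affTrans n a b) :=
    Function.Involutive.injective tinv
  have gper := per_iter hg.2
  have tperm := per_iter (tau_per hnd)
  -- value comparison lemmas
  have L1 : ∀ x : ℤ, ¬ (n:ℤ) ∣ (x - b) → g (affTrans n a b x) ≤ g x := by
    intro x hxb
    by_cases hxa : (n:ℤ) ∣ (x - a)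
    · obtain ⟨m, hm⟩ := id hxa
      rw [mul_comm] at hm
      have hx2 : g x = g a + m * n := by
        have ex : x = a + m * (n:ℤ) := by linarith
        rw [ex, gper]
      have e1 : b + (x - a) = b + m * (n:ℤ) := by rw [hm]
      rw [tau_A hxa, e1, gper]
      linarith
    · rw [tau_O hxa hxb]
  have L2 : ∀ x : ℤ, ¬ (n:ℤ) ∣ (x - a) → g x ≤ g (affTrans n a b x) := by
    intro x hxa
    by_cases hxb : (n:ℤ) ∣ (x - b)
    · obtain ⟨m, hm⟩ := id hxb
      rw [mul_comm] at hm
      have hx2 : g x = g b + m * n := by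
        have ex : x = b + m * (n:ℤ) := by linarith
        rw [ex, gper]
      have e1 : a + (x - b) = a + m * (n:ℤ) := by rw [hm]
      rw [tau_B hnd hxb, e1, gper]
      linarith
    · rw [tau_O hxa hxb]
  -- crossing structure: if i < j but τ i > τ j then i is not in class b and j not in class a
  have cross_struct : ∀ i j : ℤ, i < j → affTrans n a b j < affTrans n a b i →
      ¬ (n:ℤ) ∣ (i - b) ∧ ¬ (n:ℤ) ∣ (j - a) := by
    intro i j hij hcr
    constructor
    · intro hib
      have e : affTrans n a b i = a + (i - b) := tau_B hnd hib
      have hb2 := (tau_bound hab hnd j).1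
      linarith
    · intro hja
      have e : affTrans n a b j = b + (j - a) := tau_A hja
      have hb2 := (tau_bound hab hnd i).2
      linarith
  -- the normalizing shift
  set c : ℤ → ℤ := fun x => -((x - 1) / (n:ℤ)) with hc
  have hcx : ∀ x : ℤ, 1 ≤ x + c x * n ∧ x + c x * n ≤ n := by
    intro x
    have hd := Int.mul_ediv_add_emod (x - 1) (n:ℤ)
    have h0 : 0 ≤ (x - 1) % (n:ℤ) := Int.emod_nonneg _ (ne_of_gt hnz)
    have h1 : (x - 1) % (n:ℤ) < n := Int.emod_lt_of_pos _ hnz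
    have e : c x * (n:ℤ) = -((n:ℤ) * ((x-1) / (n:ℤ))) := by simp only [hc]; ring
    constructor <;> linarith
  set φ : ℤ × ℤ → ℤ × ℤ := fun p =>
    if affTrans n a b p.1 < affTrans n a b p.2 then
      (affTrans n a b p.1 + c (affTrans n a b p.1) * n,
       affTrans n a b p.2 + c (affTrans n a b p.1) * n)
    else p with hφ
  have hmap : ∀ p ∈ invSet n (g ∘ affTrans n a b), φ p ∈ invSet n g := by
    rintro ⟨i, j⟩ ⟨h1, h2, h3, h4⟩
    simp only [Function.comp_apply] at h4
    by_cases hcr : affTrans n a b i < affTrans n a b j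
    · have him := hcx (affTrans n a b i)
      simp only [hφ, if_pos hcr]
      refine ⟨him.1, him.2, ?_, ?_⟩
      · show affTrans n a b i + c (affTrans n a b i) * n <
          affTrans n a b j + c (affTrans n a b i) * n
        linarith
      · show g (affTrans n a b j + c (affTrans n a b i) * n) <
          g (affTrans n a b i + c (affTrans n a b i) * n)
        rw [gper, gper]
        linarith
    · have hne : affTrans n a b i ≠ affTrans n a b j := fun e => (ne_of_lt h3) (tinj e)
      have hcr' : affTrans n a b j < affTrans n a b i :=
        lt_of_le_of_ne (not_lt.mp hcr) (Ne.symm hne)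
      obtain ⟨hib, hja⟩ := cross_struct i j h3 hcr'
      simp only [hφ, if_neg hcr]
      refine ⟨h1, h2, h3, ?_⟩
      have e1 := L2 j hja
      have e2 := L1 i hib
      linarith
  have hinjOn : Set.InjOn φ (invSet n (g ∘ affTrans n a b)) := by
    rintro ⟨i1, j1⟩ hp ⟨i2, j2⟩ hq he
    obtain ⟨p1, p2, p3, _⟩ := hp
    obtain ⟨q1, q2, q3, _⟩ := hq
    simp only at p1 p2 p3 q1 q2 q3
    by_cases hcp : affTrans n a b i1 < affTrans n a b j1 <;>
      by_cases hcq : affTrans n a b i2 < affTrans n a b j2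
    · simp only [hφ, if_pos hcp, if_pos hcq, Prod.mk.injEq] at he
      obtain ⟨he1, he2⟩ := he
      have r1 : affTrans n a b (i1 + c (affTrans n a b i1) * n)
          = affTrans n a b (i2 + c (affTrans n a b i2) * n) := by
        rw [tperm, tperm]; exact he1
      have r2 := tinj r1
      obtain ⟨ri, rc⟩ := eq_of_small (by exact_mod_cast hn) p1 p2 q1 q2 r2
      have rj : affTrans n a b j1 = affTrans n a b j2 := by
        rw [ri] at he2
        linarith
      have hj := tinj rj
      simp [ri, hj]
    · exfalso
      simp only [hφ, if_pos hcp, if_neg hcq, Prod.mk.injEq] at he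
      obtain ⟨he1, he2⟩ := he
      have hne : affTrans n a b i2 ≠ affTrans n a b j2 := fun e => (ne_of_lt q3) (tinj e)
      have hcr' : affTrans n a b j2 < affTrans n a b i2 :=
        lt_of_le_of_ne (not_lt.mp hcq) (Ne.symm hne)
      have e1 : affTrans n a b i2 = i1 + c (affTrans n a b i1) * n := by
        rw [← he1, ← tperm, tinv]
      have e2 : affTrans n a b j2 = j1 + c (affTrans n a b i1) * n := by
        rw [← he2, ← tperm, tinv]
      rw [e1, e2] at hcr'
      linarith
    · exfalso
      simp only [hφ, if_neg hcp, if_pos hcq, Prod.mk.injEq] at he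
      obtain ⟨he1, he2⟩ := he
      have hne : affTrans n a b i1 ≠ affTrans n a b j1 := fun e => (ne_of_lt p3) (tinj e)
      have hcr' : affTrans n a b j1 < affTrans n a b i1 :=
        lt_of_le_of_ne (not_lt.mp hcp) (Ne.symm hne)
      have e1 : affTrans n a b i1 = i2 + c (affTrans n a b i2) * n := by
        rw [he1, ← tperm, tinv]
      have e2 : affTrans n a b j1 = j2 + c (affTrans n a b i2) * n := by
        rw [he2, ← tperm, tinv]
      rw [e1, e2] at hcr'
      linarith
    · simp only [hφ, if_neg hcp, if_neg hcq] at he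
      exact he
  have hfin : (invSet n g).Finite := by
    apply Set.Finite.subset
      (Set.Finite.prod (Set.finite_Icc (1:ℤ) (n:ℤ))
        (Set.finite_Icc (1:ℤ) (2*(n:ℤ) + 2*(b - a))))
    rintro ⟨i, j⟩ ⟨h1, h2, h3, h4⟩
    simp only at h1 h2 h3 h4
    have gxi : g i = (g ∘ affTrans n a b) (affTrans n a b i) := by
      simp only [Function.comp_apply, tinv]
    have gxj : g j = (g ∘ affTrans n a b) (affTrans n a b j) := by
      simp only [Function.comp_apply, tinv]
    have bi := hbdd (affTrans n a b i)
    have bj := hbdd (affTrans n a b j)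
    have ti := tau_bound hab hnd i
    have tj := tau_bound hab hnd j
    rw [← gxi] at bi
    rw [← gxj] at bj
    constructor
    · exact Set.mem_Icc.mpr ⟨h1, h2⟩
    · exact Set.mem_Icc.mpr ⟨by linarith, by linarith⟩
  rw [alen_eq, alen_eq]
  exact Set.ncard_le_ncard_of_injOn φ hmap hinjOn hfin


lemma stepDown {n : ℕ} (hn : 1 ≤ n) {g h : ℤ → ℤ} (hg : IsAffinePerm n g)
    (hs : affBruhatStep n g h) (hbh : IsBounded n h) : IsBounded n g := by
  obtain ⟨a, b, hab, hnd, heq, hlen⟩ := hs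
  subst heq
  have gper := per_iter hg.2
  have ginj := hg.1.injective
  have taua : affTrans n a b a = b := by
    rw [tau_A (by simp)]; ring
  have taub : affTrans n a b b = a := by
    rw [tau_B hnd (by simp)]; ring
  -- g a < g b
  have hgab : g a < g b := by
    rcases lt_trichotomy (g a) (g b) with h1 | h1 | h1
    · exact h1
    · exact absurd (ginj h1) (ne_of_lt hab)
    · exact absurd (core hn hab hnd hg hbh h1) (not_le.mpr hlen)
  -- key value bounds
  have hga : b ≤ g a ∧ g a ≤ a + n := by
    have h1 := hbh b
    have h2 := hbh a
    simp only [Function.comp_apply, taua, taub] at h1 h2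
    exact ⟨h1.1, by linarith⟩
  have hgb : b ≤ g b ∧ g b ≤ b + n := by
    have h1 := hbh b
    have h2 := hbh a
    simp only [Function.comp_apply, taua, taub] at h1 h2
    exact ⟨by linarith, by linarith⟩
  intro x
  by_cases hxa : (n:ℤ) ∣ (x - a)
  · obtain ⟨m, hm⟩ := hxa
    rw [mul_comm] at hm
    have ex : x = a + m * (n:ℤ) := by linarith
    rw [ex, gper]
    constructor <;> linarith [hga.1, hga.2]
  · by_cases hxb : (n:ℤ) ∣ (x - b)
    · obtain ⟨m, hm⟩ := hxb
      rw [mul_comm] at hm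
      have ex : x = b + m * (n:ℤ) := by linarith
      rw [ex, gper]
      constructor <;> linarith [hgb.1, hgb.2]
    · have h1 := hbh x
      simp only [Function.comp_apply, tau_O hxa hxb] at h1
      exact h1

lemma affine_mono {n : ℕ} {g f : ℤ → ℤ} (hle : affBruhatLE n g f)
    (hg : IsAffinePerm n g) : IsAffinePerm n f := by
  induction hle with
  | refl => exact hg
  | tail hgc hcf ih =>
      obtain ⟨a, b, hab, hnd, heq, _⟩ := hcf
      subst heq
      refine ⟨ih.1.comp (Function.Involutive.bijective (tau_invol hnd)), ?_⟩
      intro x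
      simp only [Function.comp_apply, tau_per hnd, ih.2]

lemma descend {n : ℕ} (hn : 1 ≤ n) {g : ℤ → ℤ} (hg : IsAffinePerm n g)
    {f : ℤ → ℤ} (hle : affBruhatLE n g f) (hbf : IsBounded n f) : IsBounded n g := by
  induction hle with
  | refl => exact hbf
  | tail hgc hcf ih =>
      exact ih (stepDown hn (affine_mono hgc hg) hcf hbf)


end Stmt4Aux

theorem stmt_4 (n : ℕ) (k : ℤ) (hn : 1 ≤ n) (hk0 : 0 ≤ k) (hkn : k ≤ n)
    (f g : ℤ → ℤ)
    (hf : IsAffinePerm n f) (hg : IsAffinePerm n g)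
    (hfk : HasAv n k f) (hgk : HasAv n k g)
    (hfb : IsBounded n f)
    (hle : affBruhatLE n g f) :
    IsBounded n g := by
  exact Stmt4Aux.descend hn hg hle hfb
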